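/- Let T(z) be the exponential generating function of rooted labeled trees, satisfying T = e^{zT}. Then z·T² is pseudo-involutory, i.e., the compositional inverse of z·T(z)² equals -(-z)·T(-z)², and T(-z·T(z)²) = 1/T(z). -/

import Mathlib

open PowerSeries
open Finset

/-- Composition `f ∘ g` of formal power series (meaningful when the constant
coefficient of `g` is zero). -/
noncomputable def comp (f g : PowerSeries ℚ) : PowerSeries ℚ :=
  PowerSeries.mk fun n =>
    ∑ i ∈ Finset.range (n + 1), (PowerSeries.coeff i f) * (PowerSeries.coeff n (g ^ i))

/-- A formal power series `f` is pseudo-involutory when its compositional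
inverse is `-f(-z)`. -/
def PseudoInvolutory (f : PowerSeries ℚ) : Prop :=
  comp f (-(comp f (-X))) = X ∧ comp (-(comp f (-X))) f = X

lemma coeff_comp (f g : PowerSeries ℚ) (n : ℕ) :
    coeff n (comp f g) = ∑ i ∈ range (n + 1), coeff i f * coeff n (g ^ i) :=
  coeff_mk _ _

lemma coeff_pow_eq_zero {g : PowerSeries ℚ} (hg : constantCoeff g = 0)
    {n i : ℕ} (h : n < i) : coeff n (g ^ i) = 0 :=
  X_pow_dvd_iff.1 (pow_dvd_pow_of_dvd (X_dvd_iff.2 hg) i) n h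

lemma coeff_comp_ext {g : PowerSeries ℚ} (hg : constantCoeff g = 0)
    (f : PowerSeries ℚ) (n N : ℕ) (hN : n + 1 ≤ N) :
    coeff n (comp f g) = ∑ i ∈ range N, coeff i f * coeff n (g ^ i) := by
  rw [coeff_comp]
  refine Finset.sum_subset (Finset.range_subset_range.2 hN) fun i _ hi => ?_
  rw [coeff_pow_eq_zero hg (by simpa using hi), mul_zero]

lemma sum_antidiagonal_square (n : ℕ) (F : ℕ → ℕ → ℚ) (hF : ∀ j k, n < j + k → F j k = 0) :
    ∑ i ∈ range (n + 1), ∑ p ∈ Finset.HasAntidiagonal.antidiagonal i, F p.1 p.2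
      = ∑ j ∈ range (n + 1), ∑ k ∈ range (n + 1), F j k := by
  have hdisj : (↑(range (n + 1)) : Set ℕ).PairwiseDisjoint Finset.HasAntidiagonal.antidiagonal := by
    intro i _ j _ hij
    refine Finset.disjoint_left.2 fun p hp hp' => ?_
    rw [Finset.HasAntidiagonal.mem_antidiagonal] at hp hp'
    exact hij (hp.symm.trans hp')
  have h1 : (range (n + 1)).biUnion (fun i => Finset.HasAntidiagonal.antidiagonal i)
      = (range (n + 1) ×ˢ range (n + 1)).filter (fun p => p.1 + p.2 ≤ n) := by
    ext ⟨j, k⟩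
    simp only [Finset.mem_biUnion, Finset.mem_range, Finset.HasAntidiagonal.mem_antidiagonal,
      Finset.mem_filter, Finset.mem_product]
    constructor
    · rintro ⟨i, hi, rfl⟩; omega
    · rintro ⟨⟨_, _⟩, h⟩; exact ⟨j + k, by omega, rfl⟩
  rw [← Finset.sum_biUnion hdisj, h1]
  rw [Finset.sum_subset (Finset.filter_subset _ _) (fun p hp hnp => by
    refine hF p.1 p.2 ?_
    simp only [Finset.mem_filter, Finset.mem_product] at hnp
    by_contra h
    exact hnp ⟨Finset.mem_product.1 hp, by omega⟩)]
  rw [Finset.sum_product]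

lemma comp_mul {g : PowerSeries ℚ} (hg : constantCoeff g = 0) (f₁ f₂ : PowerSeries ℚ) :
    comp (f₁ * f₂) g = comp f₁ g * comp f₂ g := by
  ext n
  have key : ∀ j k : ℕ,
      ∑ p ∈ Finset.HasAntidiagonal.antidiagonal n,
          (coeff j f₁ * coeff p.1 (g ^ j)) * (coeff k f₂ * coeff p.2 (g ^ k))
        = coeff j f₁ * coeff k f₂ * coeff n (g ^ (j + k)) := by
    intro j k
    rw [pow_add, PowerSeries.coeff_mul, Finset.mul_sum]
    exact Finset.sum_congr rfl fun p _ => by ring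
  have hL : coeff n (comp (f₁ * f₂) g)
      = ∑ j ∈ range (n + 1), ∑ k ∈ range (n + 1),
          coeff j f₁ * coeff k f₂ * coeff n (g ^ (j + k)) := by
    rw [coeff_comp, ← sum_antidiagonal_square n _
      (fun j k h => by rw [coeff_pow_eq_zero hg h, mul_zero])]
    refine Finset.sum_congr rfl fun i _ => ?_
    rw [PowerSeries.coeff_mul, Finset.sum_mul]
    refine Finset.sum_congr rfl fun p hp => ?_
    rw [Finset.HasAntidiagonal.mem_antidiagonal.1 hp]
  have hR : coeff n (comp f₁ g * comp f₂ g)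
      = ∑ j ∈ range (n + 1), ∑ k ∈ range (n + 1),
          coeff j f₁ * coeff k f₂ * coeff n (g ^ (j + k)) := by
    rw [PowerSeries.coeff_mul]
    have : ∀ p ∈ Finset.HasAntidiagonal.antidiagonal n,
        coeff p.1 (comp f₁ g) * coeff p.2 (comp f₂ g)
          = ∑ j ∈ range (n + 1), ∑ k ∈ range (n + 1),
              (coeff j f₁ * coeff p.1 (g ^ j)) * (coeff k f₂ * coeff p.2 (g ^ k)) := by
      intro p hp
      have hpn := Finset.HasAntidiagonal.mem_antidiagonal.1 hp
      rw [coeff_comp_ext hg f₁ p.1 (n+1) (by omega), coeff_comp_ext hg f₂ p.2 (n+1) (by omega),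
        Finset.sum_mul_sum]
    rw [Finset.sum_congr rfl this, Finset.sum_comm]
    refine Finset.sum_congr rfl fun j _ => ?_
    rw [Finset.sum_comm]
    exact Finset.sum_congr rfl fun k _ => key j k
  rw [hL, hR]


lemma comp_neg (f g : PowerSeries ℚ) : comp (-f) g = -comp f g := by
  ext n
  simp [coeff_comp, Finset.sum_neg_distrib]

lemma comp_C (a : ℚ) (g : PowerSeries ℚ) : comp (C a) g = C a := by
  ext n
  rw [coeff_comp, Finset.sum_eq_single 0]
  · simp [coeff_C]
  · intro i _ hi; simp [coeff_C, hi]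
  · simp
lemma comp_one (g : PowerSeries ℚ) : comp 1 g = 1 := by
  simpa using comp_C 1 g

lemma constantCoeff_comp (f g : PowerSeries ℚ) :
    constantCoeff (comp f g) = constantCoeff f := by
  rw [← coeff_zero_eq_constantCoeff_apply, ← coeff_zero_eq_constantCoeff_apply, coeff_comp]
  simp

lemma comp_X {g : PowerSeries ℚ} (hg : constantCoeff g = 0) : comp X g = g := by
  ext n
  rw [coeff_comp]
  cases n with
  | zero => simpa using hg.symm
  | succ m =>
    rw [Finset.sum_eq_single 1]
    · simp
    · intro i _ hi; simp [coeff_X, hi]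
    · intro h; exact absurd (Finset.mem_range.2 (by omega)) h

lemma comp_pow {g : PowerSeries ℚ} (hg : constantCoeff g = 0) (f : PowerSeries ℚ) (i : ℕ) :
    comp (f ^ i) g = comp f g ^ i := by
  induction i with
  | zero => simpa using comp_one g
  | succ m ih => rw [pow_succ, pow_succ, comp_mul hg, ih]

lemma comp_assoc {g h : PowerSeries ℚ} (hg : constantCoeff g = 0)
    (hh : constantCoeff h = 0) (f : PowerSeries ℚ) :
    comp (comp f g) h = comp f (comp g h) := by
  ext n
  rw [coeff_comp, coeff_comp]
  have step : ∀ i ∈ range (n + 1), coeff i (comp f g) * coeff n (h ^ i)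
      = ∑ j ∈ range (n + 1), coeff j f * (coeff i (g ^ j) * coeff n (h ^ i)) := by
    intro i hi
    rw [coeff_comp_ext hg f i (n + 1) (by simp at hi; omega), Finset.sum_mul]
    exact Finset.sum_congr rfl fun j _ => by ring
  rw [Finset.sum_congr rfl step, Finset.sum_comm]
  refine Finset.sum_congr rfl fun j _ => ?_
  rw [← Finset.mul_sum]
  congr 1
  rw [← coeff_comp, comp_pow hh g j]

lemma comp_id (f : PowerSeries ℚ) : comp f X = f := by
  ext n
  rw [coeff_comp, Finset.sum_eq_single n]
  · simp [coeff_X_pow]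
  · intro i _ hi; simp [coeff_X_pow, Ne.symm hi]
  · simp

lemma comp_neg_X (f : PowerSeries ℚ) : comp f (-X) = rescale (-1) f := by
  ext n
  rw [coeff_comp, coeff_rescale, Finset.sum_eq_single n]
  · rw [neg_pow, show ((-1 : PowerSeries ℚ)) = C (-1) by simp, ← map_pow, coeff_C_mul,
      coeff_X_pow]
    simp [mul_comm]
  · intro i _ hi
    rw [neg_pow, show ((-1 : PowerSeries ℚ)) = C (-1) by simp, ← map_pow, coeff_C_mul,
      coeff_X_pow]
    simp [Ne.symm hi]
  · simp

lemma exp_comp_neg_X : PowerSeries.exp ℚ * comp (PowerSeries.exp ℚ) (-X) = 1 := by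
  rw [comp_neg_X]
  exact exp_mul_exp_neg_eq_one

lemma exp_inv {w : PowerSeries ℚ} (hw : constantCoeff w = 0) :
    comp (PowerSeries.exp ℚ) w * comp (PowerSeries.exp ℚ) (-w) = 1 := by
  have h1 : comp (PowerSeries.exp ℚ) (-w) = comp (comp (PowerSeries.exp ℚ) (-X)) w := by
    rw [comp_assoc (by simp) hw, comp_neg, comp_X hw]
  rw [h1, ← comp_mul hw, exp_comp_neg_X, comp_one]

lemma pow_coeff_congr {w w' : PowerSeries ℚ} (hw : constantCoeff w = 0)
    (hw' : constantCoeff w' = 0)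
    {m : ℕ} (hc : ∀ k < m, coeff k w = coeff k w') {i : ℕ} (hi : 2 ≤ i) :
    coeff m (w ^ i) = coeff m (w' ^ i) := by
  have hd : (X : PowerSeries ℚ) ^ m ∣ (w - w') := X_pow_dvd_iff.2 fun k hk => by
    rw [map_sub, hc k hk, sub_self]
  have hs : (X : PowerSeries ℚ) ∣ ∑ j ∈ range i, w ^ j * w' ^ (i - 1 - j) := by
    refine Finset.dvd_sum fun j hj => ?_
    rcases Nat.eq_zero_or_pos j with rfl | hj0
    · exact Dvd.dvd.mul_left (dvd_pow (X_dvd_iff.2 hw') (by simp at hj ⊢; omega)) _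
    · exact Dvd.dvd.mul_right (dvd_pow (X_dvd_iff.2 hw) (by omega)) _
  have hdvd : (X : PowerSeries ℚ) ^ (m + 1) ∣ w ^ i - w' ^ i := by
    rw [← geom_sum₂_mul w w' i, pow_succ']
    exact mul_dvd_mul hs hd
  have h0 := X_pow_dvd_iff.1 hdvd m (lt_add_one m)
  rw [map_sub, sub_eq_zero] at h0
  exact h0

lemma comp_inj {p w w' : PowerSeries ℚ} (hp1 : coeff 1 p = 1)
    (hw : constantCoeff w = 0) (hw' : constantCoeff w' = 0)
    (h : comp p w = comp p w') : w = w' := by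
  ext n
  induction n using Nat.strong_induction_on with
  | _ n ih =>
    cases n with
    | zero => rw [coeff_zero_eq_constantCoeff_apply, coeff_zero_eq_constantCoeff_apply, hw, hw']
    | succ m =>
      have h1 := congrArg (coeff (m + 1)) h
      rw [coeff_comp, coeff_comp] at h1
      have heq : ∀ i ∈ (range (m + 2)).erase 1,
          coeff i p * coeff (m + 1) (w ^ i) = coeff i p * coeff (m + 1) (w' ^ i) := by
        intro i hi
        have hi1 := Finset.ne_of_mem_erase hi
        rcases Nat.eq_zero_or_pos i with rfl | hpos
        · simp
        · rw [pow_coeff_congr hw hw' (fun k hk => ih k (by omega)) (by omega)]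
      have hmem : (1 : ℕ) ∈ range (m + 2) := by simp
      rw [← Finset.add_sum_erase _ _ hmem, ← Finset.add_sum_erase _ _ hmem,
        Finset.sum_congr rfl heq] at h1
      have h2 := add_right_cancel h1
      rwa [pow_one, pow_one, hp1, one_mul, one_mul] at h2

lemma coeff_one_X_mul (r : PowerSeries ℚ) : coeff 1 (X * r) = constantCoeff r := by
  rw [show (1:ℕ) = 0 + 1 by rfl, PowerSeries.coeff_succ_X_mul, coeff_zero_eq_constantCoeff_apply]

lemma psi_neg {z : PowerSeries ℚ} (hz : constantCoeff z = 0) :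
    comp (X * comp (PowerSeries.exp ℚ) (-X)) z = z * comp (PowerSeries.exp ℚ) (-z) := by
  rw [comp_mul hz, comp_X hz, comp_assoc (by simp) hz, comp_neg, comp_X hz]

lemma psi_pos {z : PowerSeries ℚ} (hz : constantCoeff z = 0) :
    comp (X * PowerSeries.exp ℚ) z = z * comp (PowerSeries.exp ℚ) z := by
  rw [comp_mul hz, comp_X hz]

lemma coeff_one_psi_neg : coeff 1 (X * comp (PowerSeries.exp ℚ) (-X)) = 1 := by
  rw [coeff_one_X_mul, constantCoeff_comp, constantCoeff_exp]

lemma coeff_one_psi_pos : coeff 1 (X * PowerSeries.exp ℚ) = 1 := by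
  rw [coeff_one_X_mul, constantCoeff_exp]

/-- If `P = e^{XP}` then `P∘h = e^{h·(P∘h)}`. -/
lemma comp_fix {P h : PowerSeries ℚ} (hP : P = comp (PowerSeries.exp ℚ) (X * P))
    (hh : constantCoeff h = 0) :
    comp P h = comp (PowerSeries.exp ℚ) (h * comp P h) := by
  conv_lhs => rw [hP]
  rw [comp_assoc (by simp) hh, comp_mul hh, comp_X hh]

/-- If `Q = e^{-XQ}` then `Q∘h = e^{-h·(Q∘h)}`. -/
lemma comp_fix' {Q h : PowerSeries ℚ} (hQ : Q = comp (PowerSeries.exp ℚ) (-(X * Q)))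
    (hh : constantCoeff h = 0) :
    comp Q h = comp (PowerSeries.exp ℚ) (-(h * comp Q h)) := by
  conv_lhs => rw [hQ]
  rw [comp_assoc (by simp) hh, comp_neg, comp_mul hh, comp_X hh]

lemma keyA {P Q : PowerSeries ℚ} (hP : P = comp (PowerSeries.exp ℚ) (X * P))
    (hQ : Q = comp (PowerSeries.exp ℚ) (-(X * Q))) :
    comp (X * P ^ 2) (X * Q ^ 2) = X := by
  have hw0 : constantCoeff (X * Q) = 0 := by simp
  have hg0 : constantCoeff (X * Q ^ 2) = 0 := by simp
  set S := comp P (X * Q ^ 2) with hSdef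
  have hy0 : constantCoeff (X * Q ^ 2 * S) = 0 := by simp [hg0]
  have hS : S = comp (PowerSeries.exp ℚ) (X * Q ^ 2 * S) := comp_fix hP hg0
  have hgw : X * Q ^ 2 = (X * Q) * comp (PowerSeries.exp ℚ) (-(X * Q)) := by
    rw [← hQ]; ring
  have hXw : (X * Q) * comp (PowerSeries.exp ℚ) (X * Q) = X := by
    have h1 : (X * Q) * comp (PowerSeries.exp ℚ) (X * Q)
        = X * (comp (PowerSeries.exp ℚ) (X * Q) * comp (PowerSeries.exp ℚ) (-(X * Q))) := by
      nth_rewrite 1 [hQ]; ring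
    rw [h1, exp_inv hw0, mul_one]
  have hy : (X * Q ^ 2 * S) * comp (PowerSeries.exp ℚ) (-(X * Q ^ 2 * S)) = X * Q ^ 2 := by
    have h2 : (X * Q ^ 2 * S) * comp (PowerSeries.exp ℚ) (-(X * Q ^ 2 * S))
        = (X * Q ^ 2) * (comp (PowerSeries.exp ℚ) (X * Q ^ 2 * S)
            * comp (PowerSeries.exp ℚ) (-(X * Q ^ 2 * S))) := by
      nth_rewrite 1 [hS]; ring
    rw [h2, exp_inv hy0, mul_one]
  have hyw : X * Q ^ 2 * S = X * Q :=
    comp_inj coeff_one_psi_neg hy0 hw0 (by rw [psi_neg hy0, psi_neg hw0, hy, hgw])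
  have hSw : S = comp (PowerSeries.exp ℚ) (X * Q) := by rw [hS, hyw]
  calc comp (X * P ^ 2) (X * Q ^ 2)
      = (X * Q ^ 2) * S ^ 2 := by
        rw [comp_mul hg0, comp_X hg0, comp_pow hg0, hSdef]
    _ = ((X * Q) * comp (PowerSeries.exp ℚ) (X * Q))
        * (comp (PowerSeries.exp ℚ) (X * Q) * comp (PowerSeries.exp ℚ) (-(X * Q))) := by
        rw [hgw, hSw]; ring
    _ = X := by rw [hXw, exp_inv hw0, mul_one]

lemma keyB {P Q : PowerSeries ℚ} (hP : P = comp (PowerSeries.exp ℚ) (X * P))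
    (hQ : Q = comp (PowerSeries.exp ℚ) (-(X * Q))) :
    comp (X * Q ^ 2) (X * P ^ 2) = X := by
  have hu0 : constantCoeff (X * P) = 0 := by simp
  have hf0 : constantCoeff (X * P ^ 2) = 0 := by simp
  set S := comp Q (X * P ^ 2) with hSdef
  have hy0 : constantCoeff (X * P ^ 2 * S) = 0 := by simp [hf0]
  have hS : S = comp (PowerSeries.exp ℚ) (-(X * P ^ 2 * S)) := comp_fix' hQ hf0
  have hfu : X * P ^ 2 = (X * P) * comp (PowerSeries.exp ℚ) (X * P) := by
    rw [← hP]; ring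
  have hXu : (X * P) * comp (PowerSeries.exp ℚ) (-(X * P)) = X := by
    have h1 : (X * P) * comp (PowerSeries.exp ℚ) (-(X * P))
        = X * (comp (PowerSeries.exp ℚ) (X * P) * comp (PowerSeries.exp ℚ) (-(X * P))) := by
      nth_rewrite 1 [hP]; ring
    rw [h1, exp_inv hu0, mul_one]
  have hy : (X * P ^ 2 * S) * comp (PowerSeries.exp ℚ) (X * P ^ 2 * S) = X * P ^ 2 := by
    have h2 : (X * P ^ 2 * S) * comp (PowerSeries.exp ℚ) (X * P ^ 2 * S)
        = (X * P ^ 2) * (comp (PowerSeries.exp ℚ) (X * P ^ 2 * S)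
            * comp (PowerSeries.exp ℚ) (-(X * P ^ 2 * S))) := by
      nth_rewrite 1 [hS]; ring
    rw [h2, exp_inv hy0, mul_one]
  have hyu : X * P ^ 2 * S = X * P :=
    comp_inj coeff_one_psi_pos hy0 hu0 (by rw [psi_pos hy0, psi_pos hu0, hy, hfu])
  have hSu : S = comp (PowerSeries.exp ℚ) (-(X * P)) := by rw [hS, hyu]
  calc comp (X * Q ^ 2) (X * P ^ 2)
      = (X * P ^ 2) * S ^ 2 := by
        rw [comp_mul hf0, comp_X hf0, comp_pow hf0, hSdef]
    _ = ((X * P) * comp (PowerSeries.exp ℚ) (-(X * P)))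
        * (comp (PowerSeries.exp ℚ) (X * P) * comp (PowerSeries.exp ℚ) (-(X * P))) := by
        rw [hfu, hSu]; ring
    _ = X := by rw [hXu, exp_inv hu0, mul_one]

lemma keyC {P : PowerSeries ℚ} (hP : P = comp (PowerSeries.exp ℚ) (X * P)) :
    comp P (-(X * P ^ 2)) = comp (PowerSeries.exp ℚ) (-(X * P)) := by
  have hu0 : constantCoeff (X * P) = 0 := by simp
  have hnu0 : constantCoeff (-(X * P)) = 0 := by simp
  have hnf0 : constantCoeff (-(X * P ^ 2)) = 0 := by simp
  set S := comp P (-(X * P ^ 2)) with hSdef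
  have hy0 : constantCoeff (-(X * P ^ 2) * S) = 0 := by simp
  have hS : S = comp (PowerSeries.exp ℚ) (-(X * P ^ 2) * S) := comp_fix hP hnf0
  have hfu : X * P ^ 2 = (X * P) * comp (PowerSeries.exp ℚ) (X * P) := by
    rw [← hP]; ring
  have hy : (-(X * P ^ 2) * S) * comp (PowerSeries.exp ℚ) (-(-(X * P ^ 2) * S))
      = -(X * P ^ 2) := by
    have h2 : (-(X * P ^ 2) * S) * comp (PowerSeries.exp ℚ) (-(-(X * P ^ 2) * S))
        = (-(X * P ^ 2)) * (comp (PowerSeries.exp ℚ) (-(X * P ^ 2) * S)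
            * comp (PowerSeries.exp ℚ) (-(-(X * P ^ 2) * S))) := by
      nth_rewrite 1 [hS]; ring
    rw [h2, exp_inv hy0, mul_one]
  have hyu : -(X * P ^ 2) * S = -(X * P) := by
    refine comp_inj coeff_one_psi_neg hy0 hnu0 ?_
    rw [psi_neg hy0, psi_neg hnu0, hy, neg_neg, hfu]
    ring
  rw [hS, hyu]

/-- For the exponential generating function of rooted labeled trees,
`T = e^{zT}`, the series `z·T²` is pseudo-involutory (its compositional
inverse is `-(-z)·T(-z)²`), and `T(-z·T(z)²) = 1/T(z)`, i.e. `[T, zT²]` is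
a pseudo-involution. -/
theorem labeled_trees_pseudo_involution (T : PowerSeries ℚ)
    (hT0 : PowerSeries.constantCoeff T = 1)
    (hT : T = comp (PowerSeries.exp ℚ) (X * T)) :
    PseudoInvolutory (X * T ^ 2) ∧ comp T (-(X * T ^ 2)) = T⁻¹ := by
  have hQ : comp T (-X) = comp (PowerSeries.exp ℚ) (-(X * comp T (-X))) := by
    have h1 : comp T (-X) = comp (PowerSeries.exp ℚ) (comp (X * T) (-X)) := by
      conv_lhs => rw [hT]
      rw [comp_assoc (by simp) (by simp)]
    have h2 : comp (X * T) (-X) = -(X * comp T (-X)) := by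
      rw [comp_mul (by simp), comp_X (by simp)]; ring
    nth_rewrite 1 [h1]
    rw [h2]
  have hgexpr : -(comp (X * T ^ 2) (-X)) = X * (comp T (-X)) ^ 2 := by
    rw [comp_mul (by simp : constantCoeff (-X : PowerSeries ℚ) = 0),
      comp_pow (by simp : constantCoeff (-X : PowerSeries ℚ) = 0),
      comp_X (by simp : constantCoeff (-X : PowerSeries ℚ) = 0)]
    ring
  refine ⟨⟨?_, ?_⟩, ?_⟩
  · rw [hgexpr]; exact keyA hT hQ
  · rw [hgexpr]; exact keyB hT hQ
  · rw [keyC hT]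
    refine (PowerSeries.eq_inv_iff_mul_eq_one (by rw [hT0]; exact one_ne_zero)).2 ?_
    nth_rewrite 2 [hT]
    rw [mul_comm]
    exact exp_inv (by simp)
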